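/- Let r ≥ 1 and γ ≥ 1. There exists a constant C depending only on r and γ such that for every real Banach space X and every compact set K ⊂ X for which Λ := sup_{m≥0} (m+1)^r δ*_{m,γ}(K)_X is finite, one has ε_n(K)_X ≤ C (n+1)^{-r} Λ for all n ≥ 0. -/

import Mathlib

open Metric

def IsNorm {n : ℕ} (nrm : (Fin n → ℝ) → ℝ) : Prop :=
  (∀ x, 0 ≤ nrm x) ∧
  (∀ x, nrm x = 0 → x = 0) ∧
  (∀ (c : ℝ) (x), nrm (c • x) = |c| * nrm x) ∧
  (∀ x y, nrm (x + y) ≤ nrm x + nrm y)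

noncomputable def stableWidth (X : Type*) [NormedAddCommGroup X]
    (K : Set X) (n : ℕ) (γ : ℝ) : ℝ :=
  sInf { d | ∃ (nrm : (Fin n → ℝ) → ℝ) (a : X → Fin n → ℝ) (M : (Fin n → ℝ) → X),
    IsNorm nrm ∧
    (∀ f ∈ K, ∀ g ∈ K, nrm (a f - a g) ≤ γ * ‖f - g‖) ∧
    (∀ x y, ‖M x - M y‖ ≤ γ * nrm (x - y)) ∧
    d = ⨆ f : K, ‖(f : X) - M (a (f : X))‖ }

noncomputable def modStableWidth (X : Type*) [NormedAddCommGroup X]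
    (K : Set X) (n : ℕ) (γ : ℝ) : ℝ :=
  sInf { d | ∃ (nrm : (Fin n → ℝ) → ℝ) (a : X → Fin n → ℝ) (M : (Fin n → ℝ) → X),
    IsNorm nrm ∧
    (∀ f g : X, nrm (a f - a g) ≤ γ * ‖f - g‖) ∧
    (∀ x y, ‖M x - M y‖ ≤ γ * nrm (x - y)) ∧
    d = ⨆ f : K, ‖(f : X) - M (a (f : X))‖ }

noncomputable def entropyNumber (X : Type*) [NormedAddCommGroup X] (K : Set X) (n : ℕ) : ℝ :=
  sInf { ε : ℝ | 0 < ε ∧ ∃ T : Finset X, T.card ≤ 2 ^ n ∧ K ⊆ ⋃ c ∈ T, closedBall c ε }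

section Aux

open MeasureTheory Set Pointwise

variable {m : ℕ}

lemma IsNorm.zero {nrm : (Fin m → ℝ) → ℝ} (h : IsNorm nrm) : nrm 0 = 0 := by
  have := h.2.2.1 0 0
  simpa using this

lemma IsNorm.neg' {nrm : (Fin m → ℝ) → ℝ} (h : IsNorm nrm) (x : Fin m → ℝ) :
    nrm (-x) = nrm x := by
  have := h.2.2.1 (-1) x
  simpa using this

lemma IsNorm.sub_symm {nrm : (Fin m → ℝ) → ℝ} (h : IsNorm nrm) (x y : Fin m → ℝ) :
    nrm (x - y) = nrm (y - x) := by
  rw [← neg_sub y x, h.neg']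

lemma IsNorm.tri {nrm : (Fin m → ℝ) → ℝ} (h : IsNorm nrm) (x y z : Fin m → ℝ) :
    nrm (x - z) ≤ nrm (x - y) + nrm (y - z) := by
  have := h.2.2.2 (x - y) (y - z)
  simpa using this

lemma IsNorm.sum_le {nrm : (Fin m → ℝ) → ℝ} (h : IsNorm nrm) {ι : Type*} (s : Finset ι)
    (f : ι → Fin m → ℝ) : nrm (∑ i ∈ s, f i) ≤ ∑ i ∈ s, nrm (f i) := by
  classical
  induction s using Finset.induction with
  | empty => simp [h.zero]
  | insert _ _ hx ih =>
      rw [Finset.sum_insert hx, Finset.sum_insert hx]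
      exact le_trans (h.2.2.2 _ _) (by linarith)

lemma IsNorm.exists_upper {nrm : (Fin m → ℝ) → ℝ} (h : IsNorm nrm) :
    ∃ c2 : ℝ, 0 < c2 ∧ ∀ x, nrm x ≤ c2 * ‖x‖ := by
  classical
  set e : Fin m → (Fin m → ℝ) := fun i => (fun j => if i = j then 1 else 0) with he
  have h0 : (0:ℝ) ≤ ∑ i, nrm (e i) := Finset.sum_nonneg fun i _ => h.1 _
  refine ⟨(∑ i, nrm (e i)) + 1, by linarith, fun x => ?_⟩
  calc nrm x = nrm (∑ i, x i • e i) := by rw [← pi_eq_sum_univ x]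
    _ ≤ ∑ i, nrm (x i • e i) := h.sum_le _ _
    _ = ∑ i, |x i| * nrm (e i) := by simp [h.2.2.1]
    _ ≤ ∑ i, ‖x‖ * nrm (e i) := by
        refine Finset.sum_le_sum fun i _ => ?_
        have h1 : |x i| ≤ ‖x‖ := by simpa using norm_le_pi_norm x i
        exact mul_le_mul_of_nonneg_right h1 (h.1 _)
    _ = (∑ i, nrm (e i)) * ‖x‖ := by rw [← Finset.mul_sum, mul_comm]
    _ ≤ ((∑ i, nrm (e i)) + 1) * ‖x‖ := by
        have := norm_nonneg x; nlinarith

lemma IsNorm.continuous {nrm : (Fin m → ℝ) → ℝ} (h : IsNorm nrm) : Continuous nrm := by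
  obtain ⟨c2, hc2, hub⟩ := h.exists_upper
  have habs : ∀ x y, |nrm x - nrm y| ≤ nrm (x - y) := by
    intro x y
    rw [abs_sub_le_iff]
    constructor
    · have := h.2.2.2 (x - y) y
      rw [sub_add_cancel] at this
      linarith
    · have := h.2.2.2 (y - x) x
      rw [sub_add_cancel] at this
      rw [h.sub_symm y x] at this
      linarith
  have lip : LipschitzWith (Real.toNNReal c2) nrm := by
    refine LipschitzWith.of_dist_le_mul fun x y => ?_
    rw [Real.dist_eq, dist_eq_norm]
    calc |nrm x - nrm y| ≤ nrm (x - y) := habs x y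
      _ ≤ c2 * ‖x - y‖ := hub _
      _ ≤ (Real.toNNReal c2 : ℝ) * ‖x - y‖ := by
          refine mul_le_mul_of_nonneg_right ?_ (norm_nonneg _)
          exact (Real.le_coe_toNNReal c2)
  exact lip.continuous

lemma IsNorm.exists_lower (hm : 0 < m) {nrm : (Fin m → ℝ) → ℝ} (h : IsNorm nrm) :
    ∃ c1 : ℝ, 0 < c1 ∧ ∀ x, c1 * ‖x‖ ≤ nrm x := by
  have hne : Nonempty (Fin m) := ⟨⟨0, hm⟩⟩
  have hx0 : ((fun _ => (1:ℝ)) : Fin m → ℝ) ∈ sphere (0 : Fin m → ℝ) 1 := by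
    rw [mem_sphere_zero_iff_norm]
    simp
  obtain ⟨z, hz, hmin⟩ := (isCompact_sphere (0 : Fin m → ℝ) 1).exists_isMinOn ⟨_, hx0⟩
    h.continuous.continuousOn
  have hz1 : ‖z‖ = 1 := mem_sphere_zero_iff_norm.1 hz
  have hc1 : 0 < nrm z := by
    rcases lt_or_eq_of_le (h.1 z) with h' | h'
    · exact h'
    · exfalso
      have : z = 0 := h.2.1 z h'.symm
      rw [this, norm_zero] at hz1; norm_num at hz1
  refine ⟨nrm z, hc1, fun x => ?_⟩
  rcases eq_or_ne x 0 with rfl | hx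
  · simp [h.zero]
  · have hnx : 0 < ‖x‖ := norm_pos_iff.2 hx
    have hz' : ‖x‖⁻¹ • x ∈ sphere (0 : Fin m → ℝ) 1 := by
      rw [mem_sphere_zero_iff_norm, norm_smul]
      rw [norm_inv, norm_norm]
      field_simp
    have h1 : nrm z ≤ nrm (‖x‖⁻¹ • x) := isMinOn_iff.1 hmin _ hz'
    rw [h.2.2.1, abs_inv, abs_of_pos hnx] at h1
    calc nrm z * ‖x‖ ≤ (‖x‖⁻¹ * nrm x) * ‖x‖ := mul_le_mul_of_nonneg_right h1 (norm_nonneg _)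
      _ = nrm x := by field_simp


lemma card_le_of_sep (hm : 0 < m) {nrm : (Fin m → ℝ) → ℝ} (h : IsNorm nrm) {T η : ℝ}
    (hη : 0 < η) (hT : 0 ≤ T) (P : Finset (Fin m → ℝ))
    (hsep : ∀ p ∈ P, ∀ q ∈ P, p ≠ q → η < nrm (p - q))
    (hdiam : ∀ p ∈ P, ∀ q ∈ P, nrm (p - q) ≤ T) :
    (P.card : ℝ) ≤ ((2*T + 2*η)/η)^m := by
  classical
  rcases P.eq_empty_or_nonempty with rfl | ⟨x0, hx0⟩
  · simp only [Finset.card_empty, Nat.cast_zero]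
    positivity
  obtain ⟨c2, hc2, hub⟩ := h.exists_upper
  obtain ⟨c1, hc1, hlb⟩ := h.exists_lower hm
  set U : Set (Fin m → ℝ) := {y | nrm y ≤ 1} with hU
  have hU0 : 0 < volume U := by
    refine lt_of_lt_of_le (measure_ball_pos volume 0 (show (0:ℝ) < c2⁻¹ by positivity))
      (measure_mono ?_)
    intro y hy
    rw [mem_ball, dist_zero_right] at hy
    have h1 : c2 * ‖y‖ < c2 * c2⁻¹ := mul_lt_mul_of_pos_left hy hc2
    rw [mul_inv_cancel₀ (ne_of_gt hc2)] at h1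
    exact le_of_lt (lt_of_le_of_lt (hub y) h1)
  have hUt : volume U < ⊤ := by
    refine lt_of_le_of_lt (measure_mono ?_) (measure_closedBall_lt_top (x := (0 : Fin m → ℝ))
      (r := c1⁻¹))
    intro y hy
    have h1 : c1 * ‖y‖ ≤ 1 := le_trans (hlb y) hy
    rw [mem_closedBall, dist_zero_right, ← one_div, le_div_iff₀ hc1]
    linarith [h1, mul_comm c1 ‖y‖]
  have hscale : ∀ s : ℝ, 0 < s → ∀ x : Fin m → ℝ,
      volume {y | nrm (y - x) ≤ s} = ENNReal.ofReal (s^m) * volume U := by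
    intro s hs x
    have h1 : {y : Fin m → ℝ | nrm (y - x) ≤ s} = (fun y => y + (-x)) ⁻¹' {z | nrm z ≤ s} := by
      ext y; simp [sub_eq_add_neg]
    rw [h1, measure_preimage_add_right]
    have h2 : {z : Fin m → ℝ | nrm z ≤ s} = s • U := by
      ext z
      rw [Set.mem_smul_set_iff_inv_smul_mem₀ (ne_of_gt hs)]
      simp only [hU, Set.mem_setOf_eq]
      rw [show nrm (s⁻¹ • z) = s⁻¹ * nrm z by rw [h.2.2.1, abs_inv, abs_of_pos hs],
        inv_mul_le_iff₀ hs, mul_one]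
    rw [h2, Measure.addHaar_smul]
    congr 1
    rw [show Module.finrank ℝ (Fin m → ℝ) = m by simp,
      abs_of_nonneg (by positivity : (0:ℝ) ≤ s^m)]
  set V : (Fin m → ℝ) → Set (Fin m → ℝ) := fun p => {y | nrm (y - p) ≤ η/2} with hV
  have hdisj : (↑P : Set (Fin m → ℝ)).PairwiseDisjoint V := by
    intro p hp q hq hpq
    refine Set.disjoint_left.mpr fun y hyp hyq => ?_
    have h1 : nrm (p - q) ≤ nrm (p - y) + nrm (y - q) := h.tri p y q
    rw [h.sub_symm p y] at h1
    have h2 : nrm (y - p) ≤ η/2 := hyp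
    have h3 : nrm (y - q) ≤ η/2 := hyq
    have := hsep p (by exact_mod_cast hp) q (by exact_mod_cast hq) hpq
    linarith
  have hmeasV : ∀ p ∈ P, MeasurableSet (V p) := by
    intro p _
    have : V p = (fun y => nrm (y - p)) ⁻¹' (Set.Iic (η/2)) := rfl
    rw [this]
    exact (isClosed_Iic.preimage (h.continuous.comp (continuous_id.sub continuous_const))).measurableSet
  have hsum : volume (⋃ p ∈ P, V p) = ∑ p ∈ P, volume (V p) :=
    measure_biUnion_finset hdisj hmeasV
  have hTη : 0 < T + η := by linarith
  have hsub : (⋃ p ∈ P, V p) ⊆ {y | nrm (y - x0) ≤ T + η} := by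
    intro y hy
    rw [Set.mem_iUnion₂] at hy
    obtain ⟨p, hp, hyp⟩ := hy
    have h1 : nrm (y - x0) ≤ nrm (y - p) + nrm (p - x0) := h.tri y p x0
    have h2 : nrm (y - p) ≤ η/2 := hyp
    have h3 : nrm (p - x0) ≤ T := hdiam p hp x0 hx0
    simp only [Set.mem_setOf_eq]
    linarith
  have key : (P.card : ENNReal) * (ENNReal.ofReal ((η/2)^m) * volume U)
      ≤ ENNReal.ofReal ((T+η)^m) * volume U := by
    calc (P.card : ENNReal) * (ENNReal.ofReal ((η/2)^m) * volume U)
        = ∑ _p ∈ P, (ENNReal.ofReal ((η/2)^m) * volume U) := by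
          rw [Finset.sum_const, nsmul_eq_mul]
      _ = ∑ p ∈ P, volume (V p) := by
          refine Finset.sum_congr rfl fun p _ => ?_
          rw [hscale (η/2) (by linarith) p]
      _ = volume (⋃ p ∈ P, V p) := hsum.symm
      _ ≤ volume {y | nrm (y - x0) ≤ T + η} := measure_mono hsub
      _ = ENNReal.ofReal ((T+η)^m) * volume U := hscale _ hTη x0
  rw [← mul_assoc] at key
  have key2 : (P.card : ENNReal) * ENNReal.ofReal ((η/2)^m) ≤ ENNReal.ofReal ((T+η)^m) :=
    (ENNReal.mul_le_mul_iff_left (ne_of_gt hU0) (ne_of_lt hUt)).mp key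
  have hη2 : (0:ℝ) < (η/2)^m := by positivity
  have key3 : (P.card : ENNReal) ≤ ENNReal.ofReal ((T+η)^m / (η/2)^m) := by
    rw [ENNReal.ofReal_div_of_pos hη2]
    rw [ENNReal.le_div_iff_mul_le (Or.inl (ENNReal.ofReal_pos.2 hη2).ne')
      (Or.inl ENNReal.ofReal_ne_top)]
    exact key2
  have key4 : (P.card : ℝ) ≤ (T+η)^m / (η/2)^m := by
    rw [← ENNReal.ofReal_natCast] at key3
    exact (ENNReal.ofReal_le_ofReal_iff (by positivity)).mp key3
  calc (P.card : ℝ) ≤ (T+η)^m / (η/2)^m := key4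
    _ = ((T+η)/(η/2))^m := (div_pow _ _ _).symm
    _ = ((2*T + 2*η)/η)^m := by
        congr 1
        field_simp

lemma exists_net (hm : 0 < m) {nrm : (Fin m → ℝ) → ℝ} (h : IsNorm nrm)
    (A : Set (Fin m → ℝ)) {T η : ℝ} (hη : 0 < η) (hT : 0 ≤ T)
    (hdiam : ∀ x ∈ A, ∀ y ∈ A, nrm (x - y) ≤ T) :
    ∃ P : Finset (Fin m → ℝ), (P.card : ℝ) ≤ ((2*T + 2*η)/η)^m ∧
      ∀ x ∈ A, ∃ p ∈ P, nrm (x - p) ≤ η := by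
  classical
  set s : Set ℕ := {k | ∃ P : Finset (Fin m → ℝ), ↑P ⊆ A ∧
    (∀ p ∈ P, ∀ q ∈ P, p ≠ q → η < nrm (p - q)) ∧ P.card = k} with hs
  have h0 : 0 ∈ s := ⟨∅, by simp, by simp, rfl⟩
  have hbdd : BddAbove s := by
    refine ⟨Nat.floor (((2*T + 2*η)/η)^m), fun k hk => ?_⟩
    obtain ⟨P, hPA, hPsep, hPcard⟩ := hk
    have h1 : (P.card : ℝ) ≤ ((2*T + 2*η)/η)^m := by
      refine card_le_of_sep hm h hη hT P hPsep ?_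
      intro p hp q hq
      exact hdiam p (hPA hp) q (hPA hq)
    rw [← hPcard]
    exact Nat.le_floor h1
  obtain ⟨P, hPA, hPsep, hPcard⟩ := Nat.sSup_mem ⟨0, h0⟩ hbdd
  refine ⟨P, ?_, ?_⟩
  · refine card_le_of_sep hm h hη hT P hPsep ?_
    intro p hp q hq
    exact hdiam p (hPA hp) q (hPA hq)
  · intro x hx
    by_contra hcon
    push_neg at hcon
    have hxP : x ∉ P := by
      intro hxP
      have := hcon x hxP
      rw [sub_self, h.zero] at this
      linarith
    have hmem : P.card + 1 ∈ s := by
      refine ⟨insert x P, ?_, ?_, ?_⟩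
      · intro y hy
        rcases Finset.mem_insert.1 hy with rfl | hy
        · exact hx
        · exact hPA hy
      · intro p hp0 q hq0 hpq
        rcases Finset.mem_insert.1 hp0 with rfl | hp1
        · rcases Finset.mem_insert.1 hq0 with rfl | hq1
          · exact absurd rfl hpq
          · exact hcon q hq1
        · rcases Finset.mem_insert.1 hq0 with rfl | hq1
          · rw [h.sub_symm]
            exact hcon p hp1
          · exact hPsep p hp1 q hq1 hpq
      · rw [Finset.card_insert_of_notMem hxP]
    have := le_csSup hbdd hmem
    rw [hPcard] at this
    omega


end Aux

section Main

lemma pinorm_isnorm (m : ℕ) : IsNorm (fun x : Fin m → ℝ => ‖x‖) :=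
  ⟨fun x => norm_nonneg x, fun x hx => norm_eq_zero.1 hx,
   fun c x => by show ‖c • x‖ = |c| * ‖x‖; rw [norm_smul, Real.norm_eq_abs],
   fun x y => norm_add_le x y⟩

lemma sw_set_nonempty {X : Type*} [NormedAddCommGroup X] (K : Set X) (m : ℕ) {γ : ℝ}
    (hγ : 0 ≤ γ) :
    { d | ∃ (nrm : (Fin m → ℝ) → ℝ) (a : X → Fin m → ℝ) (M : (Fin m → ℝ) → X),
      IsNorm nrm ∧
      (∀ f ∈ K, ∀ g ∈ K, nrm (a f - a g) ≤ γ * ‖f - g‖) ∧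
      (∀ x y, ‖M x - M y‖ ≤ γ * nrm (x - y)) ∧
      d = ⨆ f : K, ‖(f : X) - M (a (f : X))‖ }.Nonempty := by
  refine ⟨⨆ f : K, ‖(f : X) - (fun _ : Fin m → ℝ => (0:X)) ((fun _ => 0) (f : X))‖,
    (fun x => ‖x‖), (fun _ => 0), (fun _ => 0), pinorm_isnorm m, ?_, ?_, rfl⟩
  · intro f _ g _
    simp only [sub_zero, sub_self, norm_zero]
    exact mul_nonneg hγ (norm_nonneg _)
  · intro x y
    simp only [sub_self, norm_zero]
    exact mul_nonneg hγ (norm_nonneg _)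

lemma stableWidth_nonneg {X : Type*} [NormedAddCommGroup X] (K : Set X) (m : ℕ) (γ : ℝ) :
    0 ≤ stableWidth X K m γ := by
  refine Real.sInf_nonneg fun d hd => ?_
  obtain ⟨nrm, a, M, _, _, _, hd⟩ := hd
  rw [hd]
  exact Real.iSup_nonneg fun f => norm_nonneg _

lemma extract {X : Type*} [NormedAddCommGroup X] {K : Set X} (hK : IsCompact K) {γ : ℝ}
    (hγ : 0 ≤ γ) {m : ℕ} {e : ℝ} (he : stableWidth X K m γ < e) :
    ∃ (nrm : (Fin m → ℝ) → ℝ) (a : X → Fin m → ℝ) (M : (Fin m → ℝ) → X),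
      IsNorm nrm ∧ (∀ f ∈ K, ∀ g ∈ K, nrm (a f - a g) ≤ γ * ‖f - g‖) ∧
      (∀ x y, ‖M x - M y‖ ≤ γ * nrm (x - y)) ∧ ∀ f ∈ K, ‖f - M (a f)‖ ≤ e := by
  obtain ⟨d, hdS, hde⟩ := exists_lt_of_csInf_lt (sw_set_nonempty K m hγ) he
  obtain ⟨nrm, a, M, hn, hlipa, hlipM, hd⟩ := hdS
  refine ⟨nrm, a, M, hn, hlipa, hlipM, fun f hf => ?_⟩
  obtain ⟨Cb, hCb⟩ := Metric.isBounded_iff.1 hK.isBounded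
  have hbdd : BddAbove (Set.range fun g : K => ‖(g : X) - M (a (g : X))‖) := by
    refine ⟨‖f - M (a f)‖ + γ * (γ * Cb) + Cb, ?_⟩
    rintro x ⟨g, rfl⟩
    have hgK : (g : X) ∈ K := g.2
    have h1 : ‖(g : X) - M (a (g : X))‖ ≤ ‖(g : X) - f‖ + ‖f - M (a f)‖
        + ‖M (a f) - M (a (g : X))‖ := by
      calc ‖(g : X) - M (a (g : X))‖
          = ‖((g : X) - f) + ((f - M (a f)) + (M (a f) - M (a (g : X))))‖ := by
            congr 1; abel
        _ ≤ ‖(g : X) - f‖ + ‖(f - M (a f)) + (M (a f) - M (a (g : X)))‖ := norm_add_le _ _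
        _ ≤ ‖(g : X) - f‖ + (‖f - M (a f)‖ + ‖M (a f) - M (a (g : X))‖) :=
            add_le_add_right (norm_add_le _ _) _
        _ = _ := by ring
    have h2 : ‖(g : X) - f‖ ≤ Cb := by
      rw [← dist_eq_norm]
      exact hCb hgK hf
    have h3 : ‖M (a f) - M (a (g : X))‖ ≤ γ * (γ * Cb) := by
      calc ‖M (a f) - M (a (g : X))‖ ≤ γ * nrm (a f - a (g : X)) := hlipM _ _
        _ ≤ γ * (γ * ‖f - (g : X)‖) := by
            refine mul_le_mul_of_nonneg_left ?_ hγ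
            exact hlipa f hf (g : X) hgK
        _ ≤ γ * (γ * Cb) := by
            refine mul_le_mul_of_nonneg_left (mul_le_mul_of_nonneg_left ?_ hγ) hγ
            rw [← dist_eq_norm]
            exact hCb hf hgK
    linarith
  have h4 : ‖f - M (a f)‖ ≤ d := by
    rw [hd]
    exact le_ciSup hbdd (⟨f, hf⟩ : K)
  linarith

lemma entropy_le {X : Type*} [NormedAddCommGroup X] (K : Set X) (n : ℕ) {ρ : ℝ} (hρ : 0 < ρ)
    (hT : ∃ T : Finset X, T.card ≤ 2 ^ n ∧ K ⊆ ⋃ c ∈ T, closedBall c ρ) :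
    entropyNumber X K n ≤ ρ := by
  refine csInf_le ⟨0, fun x hx => le_of_lt hx.1⟩ ⟨hρ, hT⟩


lemma main_cover {X : Type*} [NormedAddCommGroup X] {K : Set X} {γ r Λ' : ℝ}
    (hγ : 1 ≤ γ) (hΛ : 0 < Λ') (B : ℕ)
    (hB : 8 * γ^2 * (2:ℝ) ^ r + 2 ≤ (2:ℝ) ^ B)
    (hdata : ∀ m : ℕ, ∃ (nrm : (Fin m → ℝ) → ℝ) (a : X → Fin m → ℝ) (M : (Fin m → ℝ) → X),
      IsNorm nrm ∧ (∀ f ∈ K, ∀ g ∈ K, nrm (a f - a g) ≤ γ * ‖f - g‖) ∧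
      (∀ x y, ‖M x - M y‖ ≤ γ * nrm (x - y)) ∧
      ∀ f ∈ K, ‖f - M (a f)‖ ≤ Λ' * ((m : ℝ) + 1) ^ (-r)) :
    ∀ J : ℕ, ∃ T : Finset X, T.card ≤ 2 ^ (B * 2 ^ (J+1)) ∧
      K ⊆ ⋃ c ∈ T, closedBall c (2 * Λ' * ((2:ℝ) ^ J) ^ (-r)) := by
  haveI := Classical.decEq X
  have hγ0 : (0:ℝ) < γ := lt_of_lt_of_le one_pos hγ
  intro J
  induction J with
  | zero =>
    obtain ⟨nrm, a, M, hn, hlipa, hlipM, herr⟩ := hdata 0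
    refine ⟨{M (fun i => i.elim0)}, ?_, ?_⟩
    · rw [Finset.card_singleton]
      exact Nat.one_le_pow _ 2 (by norm_num)
    · intro f hf
      rw [Set.mem_iUnion₂]
      refine ⟨M (fun i => i.elim0), Finset.mem_singleton_self _, ?_⟩
      rw [mem_closedBall, dist_eq_norm]
      have h1 : a f = (fun i => i.elim0) := funext fun i => i.elim0
      have h2 := herr f hf
      rw [h1] at h2
      have h3 : Λ' * (((0:ℕ) : ℝ) + 1) ^ (-r) = Λ' := by
        norm_num
      have h4 : 2 * Λ' * ((2:ℝ) ^ (0:ℕ)) ^ (-r) = 2 * Λ' := by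
        norm_num
      rw [h4]
      rw [h3] at h2
      linarith
  | succ J ih =>
    obtain ⟨T, hTcard, hTcov⟩ := ih
    set m : ℕ := 2 ^ (J+1) - 1 with hmdef
    have hm1 : 1 ≤ 2 ^ (J+1) := Nat.one_le_pow _ 2 (by norm_num)
    have hm2 : m + 1 = 2 ^ (J+1) := Nat.sub_add_cancel hm1
    have hm : 0 < m := by
      have h2 : 2 ≤ 2 ^ (J+1) := by
        calc 2 = 2 ^ 1 := rfl
          _ ≤ 2 ^ (J+1) := Nat.pow_le_pow_right (by norm_num) (by omega)
      omega
    obtain ⟨nrm, a, M, hn, hlipa, hlipM, herr⟩ := hdata m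
    have hcast : ((m:ℝ) + 1) = (2:ℝ) ^ (J+1) := by
      rw [show ((m:ℝ) + 1) = ((m + 1 : ℕ) : ℝ) by push_cast; ring, hm2]
      push_cast
      ring
    set e : ℝ := Λ' * ((2:ℝ) ^ (J+1)) ^ (-r) with hedef
    have hpow : (0:ℝ) < ((2:ℝ) ^ (J+1)) ^ (-r) := Real.rpow_pos_of_pos (by positivity) _
    have he : 0 < e := mul_pos hΛ hpow
    have herr' : ∀ f ∈ K, ‖f - M (a f)‖ ≤ e := by
      intro f hf
      have := herr f hf
      rwa [hcast] at this
    set η : ℝ := e / γ with hηdef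
    have hη : 0 < η := div_pos he hγ0
    set ρ : ℝ := 2 * Λ' * ((2:ℝ) ^ J) ^ (-r) with hρdef
    have htpos : (0:ℝ) < ((2:ℝ) ^ J) ^ (-r) := Real.rpow_pos_of_pos (by positivity) _
    have hρpos : 0 < ρ := by
      rw [hρdef]; positivity
    have hPc : ∀ c : X, ∃ P : Finset (Fin m → ℝ), P.card ≤ 2 ^ (B * 2 ^ (J+1)) ∧
        ∀ f ∈ K ∩ closedBall c ρ, ∃ p ∈ P, nrm (a f - p) ≤ η := by
      intro c
      have hdiam : ∀ x ∈ a '' (K ∩ closedBall c ρ), ∀ y ∈ a '' (K ∩ closedBall c ρ),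
          nrm (x - y) ≤ γ * (2 * ρ) := by
        rintro x ⟨f, hf, rfl⟩ y ⟨g, hg, rfl⟩
        calc nrm (a f - a g) ≤ γ * ‖f - g‖ := hlipa f hf.1 g hg.1
          _ ≤ γ * (2 * ρ) := by
              refine mul_le_mul_of_nonneg_left ?_ (le_of_lt hγ0)
              have h1 : dist f c ≤ ρ := hf.2
              have h2 : dist g c ≤ ρ := hg.2
              calc ‖f - g‖ = dist f g := (dist_eq_norm f g).symm
                _ ≤ dist f c + dist c g := dist_triangle f c g
                _ ≤ ρ + ρ := by rw [dist_comm c g]; linarith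
                _ = 2 * ρ := by ring
      obtain ⟨P, hPcard, hPnet⟩ := exists_net hm hn (a '' (K ∩ closedBall c ρ)) hη
        (by positivity) hdiam
      have hratio : (2 * (γ * (2 * ρ)) + 2 * η) / η ≤ (2:ℝ) ^ B := by
        have h2r : (0:ℝ) < (2:ℝ) ^ r := Real.rpow_pos_of_pos (by norm_num) r
        have hsplit : ((2:ℝ) ^ (J+1)) ^ (-r) = ((2:ℝ) ^ J) ^ (-r) * ((2:ℝ) ^ r)⁻¹ := by
          rw [pow_succ, Real.mul_rpow (by positivity) (by norm_num),
            ← Real.rpow_neg (by norm_num : (0:ℝ) ≤ 2) r]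
        have heq : (2 * (γ * (2 * ρ)) + 2 * η) / η = 8 * γ^2 * (2:ℝ) ^ r + 2 := by
          rw [hηdef, hedef, hρdef, hsplit]
          have htne : ((2:ℝ) ^ J) ^ (-r) ≠ 0 := ne_of_gt htpos
          have hsne : ((2:ℝ) ^ r) ≠ 0 := ne_of_gt h2r
          field_simp
          ring
        rw [heq]
        exact hB
      have hb1 : (0:ℝ) ≤ (2 * (γ * (2 * ρ)) + 2 * η) / η := by positivity
      have hcard2 : (P.card : ℝ) ≤ ((2:ℝ) ^ B) ^ m :=
        le_trans hPcard (pow_le_pow_left₀ hb1 hratio m)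
      have hcard3 : (P.card : ℝ) ≤ ((2 ^ (B * 2 ^ (J+1)) : ℕ) : ℝ) := by
        refine le_trans hcard2 ?_
        push_cast
        rw [← pow_mul]
        have hle : B * m ≤ B * 2 ^ (J+1) := Nat.mul_le_mul_left B (by omega)
        exact pow_le_pow_right₀ (by norm_num) hle
      exact ⟨P, by exact_mod_cast hcard3,
        fun f hf => hPnet (a f) (Set.mem_image_of_mem a hf)⟩
    choose P hPcard hPnet using hPc
    refine ⟨T.biUnion fun c => (P c).image M, ?_, ?_⟩
    · calc (T.biUnion fun c => (P c).image M).card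
          ≤ ∑ c ∈ T, ((P c).image M).card := Finset.card_biUnion_le
        _ ≤ ∑ _c ∈ T, 2 ^ (B * 2 ^ (J+1)) := Finset.sum_le_sum fun c _ =>
            le_trans Finset.card_image_le (hPcard c)
        _ = T.card * 2 ^ (B * 2 ^ (J+1)) := by rw [Finset.sum_const, smul_eq_mul]
        _ ≤ 2 ^ (B * 2 ^ (J+1)) * 2 ^ (B * 2 ^ (J+1)) := Nat.mul_le_mul hTcard le_rfl
        _ = 2 ^ (B * 2 ^ (J+1+1)) := by
            rw [← pow_add]
            congr 1
            rw [pow_succ]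
            ring
    · intro f hf
      have h0 := hTcov hf
      rw [Set.mem_iUnion₂] at h0
      obtain ⟨c, hc, hfc⟩ := h0
      obtain ⟨p, hp, hpnet⟩ := hPnet c f ⟨hf, hfc⟩
      rw [Set.mem_iUnion₂]
      refine ⟨M p, Finset.mem_biUnion.2 ⟨c, hc, Finset.mem_image_of_mem M hp⟩, ?_⟩
      rw [mem_closedBall, dist_eq_norm]
      have hγη : γ * η = e := by
        rw [hηdef]
        field_simp
      calc ‖f - M p‖ = ‖(f - M (a f)) + (M (a f) - M p)‖ := by congr 1; abel
        _ ≤ ‖f - M (a f)‖ + ‖M (a f) - M p‖ := norm_add_le _ _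
        _ ≤ e + γ * nrm (a f - p) := add_le_add (herr' f hf) (hlipM _ _)
        _ ≤ e + γ * η := add_le_add_right (mul_le_mul_of_nonneg_left hpnet (le_of_lt hγ0)) _
        _ = e + e := by rw [hγη]
        _ = 2 * Λ' * ((2:ℝ) ^ (J+1)) ^ (-r) := by rw [hedef]; ring

end Main

lemma ML.{v} (r γ : ℝ) (hr : 1 ≤ r) (hγ : 1 ≤ γ) :
    ∃ C : ℝ, 0 < C ∧
      ∀ (X : Type v) [inst : NormedAddCommGroup X] (K : Set X), IsCompact K →
        ∀ Λ' : ℝ, 0 < Λ' → (∀ m : ℕ, stableWidth X K m γ < Λ' * ((m:ℝ)+1) ^ (-r)) →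
          ∀ n : ℕ, entropyNumber X K n ≤ C * ((n:ℝ)+1) ^ (-r) * Λ' := by
  have hγ0 : (0:ℝ) < γ := lt_of_lt_of_le one_pos hγ
  have hr0 : (0:ℝ) ≤ r := le_trans zero_le_one hr
  have h2r : (0:ℝ) < (2:ℝ) ^ r := Real.rpow_pos_of_pos (by norm_num) r
  have hA2 : (2:ℝ) ≤ 8 * γ^2 * (2:ℝ) ^ r + 2 := by nlinarith
  set B : ℕ := ⌈8 * γ^2 * (2:ℝ) ^ r + 2⌉₊ with hBdef
  have hB1 : 1 ≤ B := by
    rw [hBdef]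
    have h0 : (0:ℝ) < 8 * γ^2 * (2:ℝ) ^ r + 2 := by linarith
    have := Nat.ceil_pos.2 h0
    omega
  have hBA : 8 * γ^2 * (2:ℝ) ^ r + 2 ≤ (2:ℝ) ^ B := by
    calc 8 * γ^2 * (2:ℝ) ^ r + 2 ≤ (B:ℝ) := Nat.le_ceil _
      _ ≤ (2:ℝ) ^ B := by
          have h := (Nat.lt_two_pow_self (n := B)).le
          have h' : ((B:ℕ):ℝ) ≤ ((2^B : ℕ):ℝ) := by exact_mod_cast h
          push_cast at h'
          exact h'
  have hBnn : (0:ℝ) ≤ (B:ℝ) := Nat.cast_nonneg B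
  have hB1' : (1:ℝ) ≤ (B:ℝ) := by exact_mod_cast hB1
  have h4B : (0:ℝ) < 4*(B:ℝ) := by linarith
  have h4Br : (0:ℝ) < (4*(B:ℝ)) ^ r := Real.rpow_pos_of_pos h4B r
  refine ⟨2 * (4*(B:ℝ)) ^ r, by positivity, ?_⟩
  intro X inst K hK Λ' hΛ' hsw n
  have hdata := fun m => extract hK (le_of_lt hγ0) (hsw m)
  have hq : (0:ℝ) < ((n:ℝ)+1) ^ r := Real.rpow_pos_of_pos (by positivity) r
  by_cases hn : n < 2 * B
  · -- small n : one ball of radius Λ'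
    obtain ⟨nrm, a, M, hnrm, hlipa, hlipM, herr⟩ := hdata 0
    have hcov : K ⊆ ⋃ c ∈ ({M (fun i => i.elim0)} : Finset X), closedBall c Λ' := by
      intro f hf
      rw [Set.mem_iUnion₂]
      refine ⟨_, Finset.mem_singleton_self _, ?_⟩
      rw [mem_closedBall, dist_eq_norm]
      have h1 : a f = (fun i => i.elim0) := funext fun i => i.elim0
      have h2 := herr f hf
      rw [h1] at h2
      have h3 : Λ' * (((0:ℕ):ℝ) + 1) ^ (-r) = Λ' := by norm_num
      rw [h3] at h2
      exact h2
    have hent : entropyNumber X K n ≤ Λ' := entropy_le K n hΛ'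
      ⟨_, by rw [Finset.card_singleton]; exact Nat.one_le_pow _ 2 (by norm_num), hcov⟩
    refine le_trans hent ?_
    have hle : ((n:ℝ)+1) ≤ 4*(B:ℝ) := by
      have h' : n + 1 ≤ 2*B := hn
      have h'' : ((n+1:ℕ):ℝ) ≤ ((2*B:ℕ):ℝ) := by exact_mod_cast h'
      push_cast at h''
      linarith
    have h1 : ((n:ℝ)+1) ^ r ≤ 2 * (4*(B:ℝ)) ^ r := by
      calc ((n:ℝ)+1) ^ r ≤ (4*(B:ℝ)) ^ r := Real.rpow_le_rpow (by positivity) hle hr0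
        _ ≤ 2 * (4*(B:ℝ)) ^ r := by linarith
    have h2 : (1:ℝ) ≤ 2 * (4*(B:ℝ)) ^ r * ((n:ℝ)+1) ^ (-r) := by
      rw [Real.rpow_neg (by positivity : (0:ℝ) ≤ (n:ℝ)+1), ← div_eq_mul_inv, le_div_iff₀ hq,
        one_mul]
      exact h1
    calc Λ' = 1 * Λ' := (one_mul Λ').symm
      _ ≤ (2 * (4*(B:ℝ)) ^ r * ((n:ℝ)+1) ^ (-r)) * Λ' :=
          mul_le_mul_of_nonneg_right h2 hΛ'.le
  · -- large n
    push_neg at hn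
    have hBpos' : 0 < 2*B := by omega
    set t : ℕ := n / (2*B) with htdef
    have ht1 : 1 ≤ t := (Nat.one_le_div_iff hBpos').2 hn
    set J : ℕ := Nat.log 2 t with hJdef
    have hJ1 : 2 ^ J ≤ t := Nat.pow_log_le_self 2 (by omega)
    have hJ2 : t < 2 ^ (J+1) := Nat.lt_pow_succ_log_self (by norm_num) t
    obtain ⟨T, hTcard, hTcov⟩ := main_cover hγ hΛ' B hBA hdata J
    have hexp : B * 2 ^ (J+1) ≤ n := by
      have h1 : B * 2 ^ (J+1) = (2*B) * 2 ^ J := by rw [pow_succ]; ring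
      calc B * 2 ^ (J+1) = (2*B) * 2 ^ J := h1
        _ ≤ (2*B) * t := Nat.mul_le_mul_left _ hJ1
        _ ≤ n := by
            rw [htdef, mul_comm]
            exact Nat.div_mul_le_self n (2*B)
    have hcard : T.card ≤ 2 ^ n := le_trans hTcard (Nat.pow_le_pow_right (by norm_num) hexp)
    have hppos : (0:ℝ) < ((2:ℝ) ^ J) ^ (-r) := Real.rpow_pos_of_pos (by positivity) _
    have hρpos : (0:ℝ) < 2 * Λ' * ((2:ℝ) ^ J) ^ (-r) := by positivity
    have hent := entropy_le K n hρpos ⟨T, hcard, hTcov⟩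
    refine le_trans hent ?_
    have hn1 : ((n:ℝ) + 1) ≤ 4*(B:ℝ) * (2:ℝ) ^ J := by
      have hm : n % (2*B) < 2*B := Nat.mod_lt n hBpos'
      have h1 : n < (2*B)*(t+1) := by
        have heq : n = (2*B)*t + n % (2*B) := by
          rw [htdef]
          exact (Nat.div_add_mod n (2*B)).symm
        rw [heq, Nat.mul_add, Nat.mul_one]
        exact Nat.add_lt_add_left hm _
      have h2 : n + 1 ≤ (2*B) * 2 ^ (J+1) := by
        calc n + 1 ≤ (2*B)*(t+1) := h1
          _ ≤ (2*B) * 2 ^ (J+1) := Nat.mul_le_mul_left _ hJ2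
      have h3 : ((n:ℝ)+1) ≤ (((2*B) * 2 ^ (J+1) : ℕ):ℝ) := by exact_mod_cast h2
      calc ((n:ℝ)+1) ≤ (((2*B) * 2 ^ (J+1) : ℕ):ℝ) := h3
        _ = 4*(B:ℝ) * (2:ℝ) ^ J := by
            push_cast
            rw [pow_succ]
            ring
    have hp : (0:ℝ) < ((2:ℝ) ^ J) ^ r := Real.rpow_pos_of_pos (by positivity) r
    have hkey : ((n:ℝ)+1) ^ r ≤ (4*(B:ℝ)) ^ r * ((2:ℝ) ^ J) ^ r := by
      calc ((n:ℝ)+1) ^ r ≤ ((4*(B:ℝ)) * (2:ℝ) ^ J) ^ r :=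
          Real.rpow_le_rpow (by positivity) hn1 hr0
        _ = (4*(B:ℝ)) ^ r * ((2:ℝ) ^ J) ^ r := Real.mul_rpow (by positivity) (by positivity)
    rw [Real.rpow_neg (by positivity : (0:ℝ) ≤ (2:ℝ) ^ J),
      Real.rpow_neg (by positivity : (0:ℝ) ≤ (n:ℝ)+1)]
    rw [show 2 * (4*(B:ℝ)) ^ r * (((n:ℝ)+1) ^ r)⁻¹ * Λ'
        = (2 * (4*(B:ℝ)) ^ r * Λ') / (((n:ℝ)+1) ^ r) by ring, le_div_iff₀ hq]
    calc 2 * Λ' * (((2:ℝ) ^ J) ^ r)⁻¹ * (((n:ℝ)+1) ^ r)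
        ≤ 2 * Λ' * (((2:ℝ) ^ J) ^ r)⁻¹ * ((4*(B:ℝ)) ^ r * ((2:ℝ) ^ J) ^ r) := by
          refine mul_le_mul_of_nonneg_left hkey ?_
          positivity
      _ = 2 * (4*(B:ℝ)) ^ r * Λ' := by
          field_simp

/-- Carl-type inequality: there is C = C(r,γ) such that for every Banach space X
and compact K ⊂ X, if Λ is (an upper bound for) sup_m (m+1)^r δ*_{m,γ}(K)_X, then
ε_n(K)_X ≤ C (n+1)^{-r} Λ for all n ≥ 0. -/
theorem stmt7.{u} (r γ : ℝ) (hr : 1 ≤ r) (hγ : 1 ≤ γ) :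
    ∃ C : ℝ, 0 < C ∧
      ∀ (X : Type u) [inst : NormedAddCommGroup X] (K : Set X), IsCompact K →
        ∀ Λ : ℝ, (∀ m : ℕ, ((m : ℝ) + 1) ^ r * stableWidth X K m γ ≤ Λ) →
          ∀ n : ℕ, entropyNumber X K n ≤ C * ((n : ℝ) + 1) ^ (-r) * Λ := by
  obtain ⟨C, hC, H⟩ := ML.{u} r γ hr hγ
  refine ⟨C, hC, ?_⟩
  intro X inst K hK Λ hΛ n
  have hΛ0 : 0 ≤ Λ := by
    have h0 := hΛ 0
    have h1 : (((0:ℕ)):ℝ) + 1 = 1 := by norm_num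
    rw [h1, Real.one_rpow, one_mul] at h0
    exact le_trans (stableWidth_nonneg K 0 γ) h0
  have hc : (0:ℝ) < C * ((n:ℝ)+1) ^ (-r) := by
    have := Real.rpow_pos_of_pos (show (0:ℝ) < (n:ℝ)+1 by positivity) (-r)
    positivity
  refine le_of_forall_pos_le_add fun ε hε => ?_
  have hdiv : 0 < ε / (C * ((n:ℝ)+1) ^ (-r)) := div_pos hε hc
  set Λ' : ℝ := Λ + ε / (C * ((n:ℝ)+1) ^ (-r)) with hΛ'def
  have hΛ'pos : 0 < Λ' := by rw [hΛ'def]; linarith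
  have hΛΛ' : Λ < Λ' := by rw [hΛ'def]; linarith
  have hsw : ∀ m : ℕ, stableWidth X K m γ < Λ' * ((m:ℝ)+1) ^ (-r) := by
    intro m
    have hq : (0:ℝ) < ((m:ℝ)+1) ^ r := Real.rpow_pos_of_pos (by positivity) r
    have h1 : ((m:ℝ)+1) ^ r * stableWidth X K m γ ≤ Λ := hΛ m
    rw [Real.rpow_neg (by positivity : (0:ℝ) ≤ (m:ℝ)+1),
      show Λ' * (((m:ℝ)+1) ^ r)⁻¹ = Λ' / ((m:ℝ)+1) ^ r by ring, lt_div_iff₀ hq]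
    calc stableWidth X K m γ * ((m:ℝ)+1) ^ r = ((m:ℝ)+1) ^ r * stableWidth X K m γ := by ring
      _ ≤ Λ := h1
      _ < Λ' := hΛΛ'
  have hfin := H X K hK Λ' hΛ'pos hsw n
  have hcne : C * ((n:ℝ)+1) ^ (-r) ≠ 0 := ne_of_gt hc
  calc entropyNumber X K n ≤ C * ((n:ℝ)+1) ^ (-r) * Λ' := hfin
    _ = C * ((n:ℝ)+1) ^ (-r) * Λ + ε := by
        rw [hΛ'def, mul_add, mul_comm (C * ((n:ℝ)+1) ^ (-r)) (ε / (C * ((n:ℝ)+1) ^ (-r))),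
          div_mul_cancel₀ ε hcne]
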